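/- arXiv:2211.04075 — 2 statements merged into one kernel-verified Lean document; each statement's English description precedes it below -/
import Mathlib

section
/- Let G be a connected graph and n ≥ 1. The graph Δ_G^n, whose vertices are walks of length n on G and whose edges join walks p, q such that p_i and q_i are adjacent in G for all i (i.e., p and q can appear as adjacent rows in a homomorphism from a 2×(n+1) grid to G), is bipartite if and only if G is bipartite. -/
/-- An undirected graph (self-loops allowed) given by a symmetric adjacency relation. -/
structure LoopGraph (V : Type*) where
  Adj : V → V → Prop
  symm : ∀ {a b : V}, Adj a b → Adj b a

/-- A walk of length `n` on `G`. -/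
def IsWalk {V : Type*} (G : LoopGraph V) {n : ℕ} (p : Fin (n + 1) → V) : Prop :=
  ∀ i : Fin n, G.Adj (p i.castSucc) (p i.succ)

/-- `G` is bipartite. -/
def LoopGraph.Bipartite {V : Type*} (G : LoopGraph V) : Prop :=
  ∃ f : V → Bool, ∀ a b : V, G.Adj a b → f a ≠ f b

/-- `G` is connected: any two vertices are joined by a walk. -/
def LoopGraph.Connected {V : Type*} (G : LoopGraph V) : Prop :=
  ∀ u v : V, ∃ (n : ℕ) (p : Fin (n + 1) → V),
    IsWalk G p ∧ p 0 = u ∧ p (Fin.last n) = v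

/-- The vertices of `Δ_G^n`: walks of length `n` on `G`. -/
def WalkN {V : Type*} (G : LoopGraph V) (n : ℕ) : Type _ :=
  {p : Fin (n + 1) → V // IsWalk G p}

/-- The graph `Δ_G^n` on walks of length `n`, where walks `p, q` are adjacent
when `p_i` and `q_i` are adjacent in `G` for all `i`. -/
def Delta {V : Type*} (G : LoopGraph V) (n : ℕ) : LoopGraph (WalkN G n) where
  Adj p q := ∀ i : Fin (n + 1), G.Adj (p.1 i) (q.1 i)
  symm h := fun i => G.symm (h i)

/-- A walk indexed by `ℕ`, with adjacency required below `m`. -/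
def AdjW {V : Type*} (G : LoopGraph V) (p : ℕ → V) (m : ℕ) : Prop :=
  ∀ i < m, G.Adj (p i) (p (i + 1))

lemma conn_nat {V : Type*} (G : LoopGraph V) (hconn : G.Connected) (u v : V) :
    ∃ m p, AdjW G p m ∧ p 0 = u ∧ p m = v := by
  obtain ⟨m, p, hp, h0, hl⟩ := hconn u v
  refine ⟨m, fun k => p ⟨min k m, by omega⟩, ?_, ?_, ?_⟩
  · intro i hi
    have := hp ⟨i, hi⟩
    have e1 : (⟨min i m, by omega⟩ : Fin (m+1)) = (⟨i, hi⟩ : Fin m).castSucc := by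
      ext; simp [Nat.min_eq_left (le_of_lt hi)]
    have e2 : (⟨min (i+1) m, by omega⟩ : Fin (m+1)) = (⟨i, hi⟩ : Fin m).succ := by
      ext; simp [Nat.min_eq_left hi]
    simpa [e1, e2] using this
  · simpa [show (⟨min 0 m, by omega⟩ : Fin (m+1)) = 0 from by ext; simp] using h0
  · convert hl using 2; ext; simp

lemma rev_walk {V : Type*} (G : LoopGraph V) (p : ℕ → V) (m : ℕ) (h : AdjW G p m) :
    AdjW G (fun i => p (m - i)) m := by
  intro i hi
  have h2 : m - i = (m - (i + 1)) + 1 := by omega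
  have h3 := h (m - (i + 1)) (by omega)
  simp only []
  rw [h2]
  exact G.symm h3

lemma concat_walk {V : Type*} (G : LoopGraph V) (p q : ℕ → V) (m k : ℕ)
    (hp : AdjW G p m) (hq : AdjW G q k) (hpq : p m = q 0) :
    AdjW G (fun i => if i < m then p i else q (i - m)) (m + k) := by
  intro i hi
  by_cases h1 : i + 1 < m
  · simp only [if_pos (by omega : i < m), if_pos h1]
    exact hp i (by omega)
  · by_cases h2 : i < m
    · simp only [if_pos h2, if_neg h1]
      have e : q (i + 1 - m) = p m := by rw [show i + 1 - m = 0 by omega, ← hpq]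
      rw [e]
      have := hp i h2
      rwa [show i + 1 = m by omega] at this
    · simp only [if_neg h2, if_neg h1]
      rw [show i + 1 - m = (i - m) + 1 by omega]
      exact hq (i - m) (by omega)

lemma color_walk {W : Type*} (H : LoopGraph W) (f : W → Bool)
    (hf : ∀ a b, H.Adj a b → f a ≠ f b) (p : ℕ → W) (m : ℕ) (h : AdjW H p m) :
    ∀ i ≤ m, f (p i) = xor (decide (i % 2 = 1)) (f (p 0)) := by
  intro i
  induction i with
  | zero => intro _; simp
  | succ i ih =>
    intro hi
    have h1 := ih (by omega)
    have h2 := hf _ _ (h i (by omega))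
    have h3 : f (p (i + 1)) = !f (p i) := by
      cases hx : f (p i) <;> cases hy : f (p (i + 1)) <;> simp_all
    rw [h3, h1]
    rcases Nat.mod_two_eq_zero_or_one i with h4 | h4 <;>
      simp [h4, Nat.add_mod]

/-- A connected non-bipartite graph has an odd closed walk. -/
lemma odd_closed {V : Type*} (G : LoopGraph V) (hconn : G.Connected)
    (hG : ¬ G.Bipartite) :
    ∃ (a : V) (L : ℕ) (c : ℕ → V), AdjW G c L ∧ c 0 = a ∧ c L = a ∧ L % 2 = 1 := by
  classical
  by_cases hV : Nonempty V
  · obtain ⟨u0⟩ := hV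
    set f : V → Bool := fun v =>
      decide (∃ m p, AdjW G p m ∧ p 0 = u0 ∧ p m = v ∧ m % 2 = 1) with hfdef
    rw [LoopGraph.Bipartite] at hG
    push_neg at hG
    obtain ⟨a, b, hab, hfab⟩ := hG f
    -- get walks u0 → a and u0 → b of the same parity
    have key : ∃ (m k : ℕ) (p q : ℕ → V), AdjW G p m ∧ p 0 = u0 ∧ p m = a ∧
        AdjW G q k ∧ q 0 = u0 ∧ q k = b ∧ (m + k) % 2 = 0 := by
      by_cases hfa : f a = true
      · have hfb : f b = true := by rw [← hfab]; exact hfa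
        have ha := of_decide_eq_true hfa
        have hb := of_decide_eq_true hfb
        obtain ⟨m, p, hp, hp0, hpm, hm⟩ := ha
        obtain ⟨k, q, hq, hq0, hqk, hk⟩ := hb
        exact ⟨m, k, p, q, hp, hp0, hpm, hq, hq0, hqk, by omega⟩
      · have hfa' : f a = false := by simpa using hfa
        have hfb' : f b = false := by rw [← hfab]; exact hfa'
        obtain ⟨m, p, hp, hp0, hpm⟩ := conn_nat G hconn u0 a
        obtain ⟨k, q, hq, hq0, hqk⟩ := conn_nat G hconn u0 b
        have hm : m % 2 = 0 := by
          by_contra hodd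
          have : f a = true := decide_eq_true ⟨m, p, hp, hp0, hpm, by omega⟩
          simp [this] at hfa'
        have hk : k % 2 = 0 := by
          by_contra hodd
          have : f b = true := decide_eq_true ⟨k, q, hq, hq0, hqk, by omega⟩
          simp [this] at hfb'
        exact ⟨m, k, p, q, hp, hp0, hpm, hq, hq0, hqk, by omega⟩
    obtain ⟨m, k, p, q, hp, hp0, hpm, hq, hq0, hqk, hpar⟩ := key
    -- reverse p : a → u0, concat with q : u0 → b, then the edge b → a
    have hrev : AdjW G (fun i => p (m - i)) m := rev_walk G p m hp
    set r : ℕ → V := fun i => if i < m then p (m - i) else q (i - m) with hr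
    have hrw : AdjW G r (m + k) := by
      have := concat_walk G (fun i => p (m - i)) q m k hrev hq (by simpa [hp0] using hq0.symm)
      simpa [hr] using this
    have hr0 : r 0 = a := by
      rcases Nat.eq_zero_or_pos m with hm0 | hm0
      · have hua : u0 = a := by rw [← hp0, ← hpm, hm0]
        simp [hr, hm0, hq0, hua]
      · simp [hr, hm0, hpm]
    have hrend : r (m + k) = b := by
      simp [hr, hqk]
    -- closed walk: r followed by edge b → a
    set c : ℕ → V := fun i => if i < m + k then r i else
      (if i = m + k then b else a) with hc
    refine ⟨a, m + k + 1, c, ?_, ?_, ?_, by omega⟩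
    · intro i hi
      by_cases h1 : i + 1 < m + k
      · simp only [hc, if_pos (by omega : i < m + k), if_pos h1]
        exact hrw i (by omega)
      · by_cases h2 : i < m + k
        · have hieq : i + 1 = m + k := by omega
          simp only [hc, if_pos h2, if_neg h1, if_pos hieq]
          have : r (i + 1) = b := by rw [hieq, hrend]
          have := hrw i h2
          rw [show r (i+1) = b from by rw [hieq, hrend]] at this
          exact this
        · -- i = m + k : edge from b to a
          have hieq : i = m + k := by omega
          simp only [hc, if_neg h2, if_neg h1, if_pos hieq, if_neg (by omega : ¬ i + 1 = m + k)]
          exact G.symm hab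
    · rcases Nat.eq_zero_or_pos (m + k) with hmk | hmk
      · have hm0 : m = 0 := by omega
        have hk0 : k = 0 := by omega
        have ha' : a = u0 := by rw [← hpm, hm0, hp0]
        have hb' : b = u0 := by rw [← hqk, hk0, hq0]
        simp [hc, hmk, ha', hb']
      · simp [hc, hmk, hr0]
    · simp [hc]
  · exact absurd ⟨fun _ => true, fun a => (hV ⟨a⟩).elim⟩ hG

/-- For a connected graph `G` and `n ≥ 1`, the graph `Δ_G^n` is bipartite if and
only if `G` is bipartite. -/
theorem stmt_3 {V : Type*} (G : LoopGraph V) (hconn : G.Connected) (n : ℕ) (hn : 1 ≤ n) :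
    (Delta G n).Bipartite ↔ G.Bipartite := by
  constructor
  · intro hΔ
    by_contra hG
    obtain ⟨a, L, c, hc, hc0, hcL, hL⟩ := odd_closed G hconn hG
    obtain ⟨F, hF⟩ := hΔ
    have hLpos : 0 < L := by omega
    set w : ℕ → V := fun k => c (k % L) with hw
    have hwadj : ∀ k, G.Adj (w k) (w (k + 1)) := by
      intro k
      have h1 : k % L < L := Nat.mod_lt _ hLpos
      have hkey : (k + 1) % L = (k % L + 1) % L := by
        conv_lhs => rw [Nat.add_mod]
        conv_rhs => rw [Nat.add_mod, Nat.mod_mod_of_dvd _ dvd_rfl]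
      rcases Nat.lt_or_ge (k % L + 1) L with h2 | h2
      · have he : (k + 1) % L = k % L + 1 := by
          rw [hkey]; exact Nat.mod_eq_of_lt h2
        simp only [hw, he]
        exact hc _ h1
      · have heq : k % L + 1 = L := by omega
        have he : (k + 1) % L = 0 := by rw [hkey, heq, Nat.mod_self]
        simp only [hw, he]
        have := hc (k % L) h1
        rwa [heq, hcL, ← hc0] at this
    set Q : ℕ → WalkN G n := fun j =>
      ⟨fun i => w (j + i.val), fun i => by simpa [Nat.add_assoc] using hwadj (j + i.val)⟩ with hQdef
    have hQ : AdjW (Delta G n) Q L := by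
      intro j hj i
      show G.Adj (w (j + i.val)) (w (j + 1 + i.val))
      rw [show j + 1 + i.val = (j + i.val) + 1 by omega]
      exact hwadj _
    have hQL : Q L = Q 0 := by
      apply Subtype.ext
      funext i
      show w (L + i.val) = w (0 + i.val)
      simp [hw, Nat.add_mod_left]
    have hcol := color_walk (Delta G n) F hF Q L hQ L le_rfl
    rw [hQL] at hcol
    simp [hL] at hcol
  · rintro ⟨f, hf⟩
    exact ⟨fun p => f (p.1 0), fun p q hpq => hf _ _ (hpq 0)⟩
end

section
/- Let G be a connected graph, let a and b be adjacent vertices of G, and let ψ_{a→b} be the map on non-backtracking walks sending a walk q starting at a to the walk obtained from b⌢q by deleting all backtracks (spines). Then ψ_{a→b} ∘ ψ_{b→a} is the identity on the set of non-backtracking walks starting at b. -/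
/-- An undirected graph (self-loops allowed) given by a symmetric adjacency relation. -/
structure AdjGraph (V : Type*) where
  Adj : V → V → Prop
  symm : ∀ {a b : V}, Adj a b → Adj b a

/-- A walk on `G`: a nonempty list of vertices with consecutive vertices adjacent. -/
def IsWalkL {V : Type*} (G : AdjGraph V) (p : List V) : Prop :=
  p ≠ [] ∧ p.Chain' G.Adj

/-- A walk is non-backtracking when it contains no subword of the form `x y x`. -/
def NonBacktracking {V : Type*} (p : List V) : Prop :=
  ¬ ∃ (l r : List V) (a b : V), p = l ++ a :: b :: a :: r

/-- One spine removal: replace some subword `a b a` by `a`. -/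
def SpineStep {V : Type*} (p q : List V) : Prop :=
  ∃ (l r : List V) (a b : V), p = l ++ a :: b :: a :: r ∧ q = l ++ a :: r

open Classical in
/-- Backtrack removal `φ`: a non-backtracking walk obtained from `p` by repeatedly
removing spines (well defined since the normal form is unique). -/
noncomputable def phi {V : Type*} (p : List V) : List V :=
  if h : ∃ q : List V, Relation.ReflTransGen SpineStep p q ∧ NonBacktracking q
  then h.choose else p

/-- `G` is connected. -/
def AdjGraph.ConnectedL {V : Type*} (G : AdjGraph V) : Prop :=
  ∀ u v : V, ∃ p : List V, IsWalkL G p ∧ p.head? = some u ∧ p.getLast? = some v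

lemma nb_no_step {V : Type*} {p r : List V} (h : NonBacktracking p) : ¬ SpineStep p r := by
  rintro ⟨l, r', c, d, hp, -⟩
  exact h ⟨l, r', c, d, hp⟩

lemma rtg_nb {V : Type*} {p r : List V} (h : NonBacktracking p)
    (hr : Relation.ReflTransGen SpineStep p r) : r = p := by
  rcases hr.cases_head with rfl | ⟨m, hm, -⟩
  · rfl
  · exact absurd hm (nb_no_step h)

lemma phi_nb {V : Type*} {p : List V} (h : NonBacktracking p) : phi p = p := by
  unfold phi
  split
  · next h' => exact rtg_nb h h'.choose_spec.1
  · rfl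

lemma nb_tail {V : Type*} {v : V} {s : List V} (h : NonBacktracking (v :: s)) :
    NonBacktracking s := by
  rintro ⟨l, r, c, d, hs⟩
  exact h ⟨v :: l, r, c, d, by rw [hs]; rfl⟩

lemma phi_unique {V : Type*} {p q : List V} (hex : SpineStep p q)
    (huniq : ∀ s, SpineStep p s → s = q) (hq : NonBacktracking q) : phi p = q := by
  have hE : ∃ c : List V, Relation.ReflTransGen SpineStep p c ∧ NonBacktracking c :=
    ⟨q, Relation.ReflTransGen.single hex, hq⟩
  unfold phi
  rw [dif_pos hE]
  obtain ⟨hr, hnb⟩ := hE.choose_spec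
  rcases hr.cases_head with heq | ⟨m, hm, hmc⟩
  · exfalso
    obtain ⟨l, r, c, d, hp, -⟩ := hex
    exact hnb ⟨l, r, c, d, heq.symm.trans hp⟩
  · rw [huniq m hm] at hmc
    exact rtg_nb hq hmc

/-- For adjacent vertices `a, b`, the map `ψ_{a→b}` sends a non-backtracking walk
`q` starting at `a` to `φ(b⌢q)`. The composite `ψ_{a→b} ∘ ψ_{b→a}` is the identity
on non-backtracking walks starting at `b`. -/
theorem stmt_8 {V : Type*} (G : AdjGraph V) (hconn : G.ConnectedL)
    (a b : V) (hab : G.Adj a b)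
    (q : List V) (hq : IsWalkL G q) (hnb : NonBacktracking q)
    (hstart : q.head? = some b) :
    phi (b :: phi (a :: q)) = q := by
  obtain ⟨t, rfl⟩ : ∃ t, q = b :: t := by
    cases q with
    | nil => simp at hstart
    | cons x t =>
      simp only [List.head?_cons, Option.some.injEq] at hstart
      exact ⟨t, by rw [hstart]⟩
  by_cases hta : ∃ r, t = a :: r
  · -- Case A : q = b :: a :: r
    obtain ⟨r, rfl⟩ := hta
    have hnar : NonBacktracking (a :: r) := nb_tail hnb
    have h1 : phi (a :: b :: a :: r) = a :: r := by
      apply phi_unique ⟨[], r, a, b, rfl, rfl⟩ _ hnar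
      rintro s ⟨l, r', c, d, hp, rfl⟩
      cases l with
      | nil =>
        simp only [List.nil_append, List.cons.injEq] at hp
        obtain ⟨rfl, rfl, -, rfl⟩ := hp
        rfl
      | cons l0 l' =>
        exfalso
        simp only [List.nil_append, List.cons_append, List.cons.injEq] at hp
        exact hnb ⟨l', r', c, d, hp.2⟩
    rw [h1]
    exact phi_nb hnb
  · -- Case B : t does not start with a
    have hnaq : NonBacktracking (a :: b :: t) := by
      rintro ⟨l, r, c, d, hp⟩
      cases l with
      | nil =>
        simp only [List.nil_append, List.cons.injEq] at hp
        obtain ⟨rfl, rfl, rfl⟩ := hp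
        exact hta ⟨r, rfl⟩
      | cons l0 l' =>
        simp only [List.nil_append, List.cons_append, List.cons.injEq] at hp
        exact hnb ⟨l', r, c, d, hp.2⟩
    rw [phi_nb hnaq]
    apply phi_unique ⟨[], t, b, a, rfl, rfl⟩ _ hnb
    rintro s ⟨l, r', c, d, hp, rfl⟩
    cases l with
    | nil =>
      simp only [List.nil_append, List.cons.injEq] at hp
      obtain ⟨rfl, rfl, -, rfl⟩ := hp
      rfl
    | cons l0 l' =>
      cases l' with
      | nil =>
        exfalso
        simp only [List.cons_append, List.nil_append, List.cons.injEq] at hp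
        obtain ⟨-, rfl, rfl, rfl⟩ := hp
        exact hta ⟨r', rfl⟩
      | cons l1 l'' =>
        exfalso
        simp only [List.nil_append, List.cons_append, List.cons.injEq] at hp
        exact hnb ⟨l'', r', c, d, hp.2.2⟩
end
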